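/- On the Heisenberg group with τ(a,b,c) = (a/2, b/2, c/2 + ab/6) and midpoint m(x,y) = x·τ(y⁻¹x)⁻¹, the midpoint between x = (a,b,c) and its inverse x⁻¹ = (-a,-b,-c) equals (0, 0, -2ab/3). In particular, m(x, x⁻¹) is the group identity if and only if ab = 0. -/
import Mathlib


/-- Heisenberg group law on ℝ³: `(a,b,c)·(u,v,s) = (a+u, b+v, c+s+(ub-va)/2)`. -/
noncomputable def Hmul (x y : ℝ × ℝ × ℝ) : ℝ × ℝ × ℝ :=
  (x.1 + y.1, x.2.1 + y.2.1, x.2.2 + y.2.2 + (y.1 * x.2.1 - y.2.1 * x.1) / 2)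

/-- Inverse: `(a,b,c)⁻¹ = (-a,-b,-c)`. -/
def Hinv (x : ℝ × ℝ × ℝ) : ℝ × ℝ × ℝ := (-x.1, -x.2.1, -x.2.2)

/-- Symmetry function on the Heisenberg group. -/
noncomputable def Hτ (x : ℝ × ℝ × ℝ) : ℝ × ℝ × ℝ :=
  (x.1 / 2, x.2.1 / 2, x.2.2 / 2 + x.1 * x.2.1 / 6)

/-- Midpoint function `m(x,y) = x·τ(y⁻¹x)⁻¹`. -/
noncomputable def Hmid (x y : ℝ × ℝ × ℝ) : ℝ × ℝ × ℝ :=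
  Hmul x (Hinv (Hτ (Hmul (Hinv y) x)))

/-- The midpoint between `x = (a,b,c)` and `x⁻¹` is `(0,0,-2ab/3)`; in particular it is the
identity if and only if `ab = 0`. -/
theorem heisenberg_midpoint_self_inverse (a b c : ℝ) :
    Hmid (a, b, c) (Hinv (a, b, c)) = (0, 0, -(2 * a * b) / 3) ∧
    (Hmid (a, b, c) (Hinv (a, b, c)) = ((0 : ℝ), (0 : ℝ), (0 : ℝ)) ↔ a * b = 0) := by

  have h : Hmid (a, b, c) (Hinv (a, b, c)) = (0, 0, -(2 * a * b) / 3) := by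
    simp only [Hmid, Hmul, Hinv, Hτ, Prod.mk.injEq]
    refine ⟨by ring, by ring, by ring⟩
  refine ⟨h, ?_⟩
  rw [h]
  constructor
  · intro he
    have := congrArg (Prod.snd ∘ Prod.snd) he
    simp at this
    rcases this with h1 | h1 <;> simp [h1]
  · intro he
    simp only [Prod.mk.injEq]
    exact ⟨trivial, trivial, by rw [mul_assoc, he]; ring⟩
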